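/- Let N ≥ 2, let k be an integer with 0 < k < N, let X₁,…,X_N ∈ ℝ be samples, and let x ∈ ℝᴺ have pairwise distinct coordinates. For τ > 0, let w(τ) ∈ (0,1)ᴺ be the unique minimizer of −xᵀy − τ·H_b(y) over {y ∈ ℝᴺ : 0 < yᵢ < 1, Σᵢ yᵢ = k}, and let I := {i : xᵢ is among the k largest coordinates of x}. Then as τ → 0⁺, the weighted mean μ(τ) := (1/k)·Σᵢ w(τ)ᵢ·Xᵢ converges to the elite mean (1/k)·Σ_{i∈I} Xᵢ, and the weighted variance σ²(τ) := (1/k)·Σᵢ w(τ)ᵢ·(Xᵢ − μ(τ))² converges to the elite variance (1/k)·Σ_{i∈I} (Xᵢ − (1/k)·Σ_{j∈I} Xⱼ)². In other words, the DCEM Gaussian update converges to the CEM Gaussian update as the temperature goes to 0. -/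

import Mathlib

open Finset Filter

/-- The binary entropy function `H_b(y) = -∑ i, [y i log (y i) + (1 - y i) log (1 - y i)]`. -/
noncomputable def binEntropy {N : ℕ} (y : Fin N → ℝ) : ℝ :=
  -(∑ i, (y i * Real.log (y i) + (1 - y i) * Real.log (1 - y i)))

lemma binEntropy_eq_sum {N : ℕ} (y : Fin N → ℝ) :
    binEntropy y = ∑ i, Real.binEntropy (y i) := by
  unfold binEntropy
  rw [← Finset.sum_neg_distrib]
  refine Finset.sum_congr rfl fun i _ => ?_
  rw [Real.binEntropy, Real.log_inv, Real.log_inv]; ring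

lemma binEntropy_nonneg' {N : ℕ} {y : Fin N → ℝ} (h : ∀ i, y i ∈ Set.Ioo (0:ℝ) 1) :
    0 ≤ binEntropy y := by
  rw [binEntropy_eq_sum]
  exact Finset.sum_nonneg fun i _ => Real.binEntropy_nonneg (h i).1.le (h i).2.le

lemma binEntropy_le {N : ℕ} (y : Fin N → ℝ) :
    binEntropy y ≤ N * Real.log 2 := by
  rw [binEntropy_eq_sum]
  calc ∑ i, Real.binEntropy (y i) ≤ ∑ _i : Fin N, Real.log 2 :=
        Finset.sum_le_sum fun i _ => Real.binEntropy_le_log_two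
    _ = N * Real.log 2 := by simp [mul_comm]

lemma rank_lt_rank {N : ℕ} {x : Fin N → ℝ} {i j : Fin N} (h : x i < x j) :
    (univ.filter fun l => x j < x l).card < (univ.filter fun l => x i < x l).card := by
  apply Finset.card_lt_card
  constructor
  · intro l hl
    simp only [mem_filter, mem_univ, true_and] at *
    exact h.trans hl
  · intro hsub
    have := hsub (Finset.mem_filter.mpr ⟨mem_univ j, h⟩)
    simp only [mem_filter] at this
    exact lt_irrefl _ this.2

lemma card_topk {N k : ℕ} (hkN : k ≤ N) {x : Fin N → ℝ} (hx : Function.Injective x) :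
    (univ.filter fun i : Fin N => (univ.filter fun j => x i < x j).card < k).card = k := by
  set r : Fin N → ℕ := fun i => (univ.filter fun j => x i < x j).card with hr
  have hrN : ∀ i, r i < N := by
    intro i
    have : (univ.filter fun j => x i < x j) ⊂ univ := by
      refine Finset.ssubset_univ_iff.mpr ?_
      intro h
      have h2 : i ∈ univ.filter fun j => x i < x j := by rw [h]; exact mem_univ i
      simp at h2
    simpa using Finset.card_lt_card this
  have hrinj : Function.Injective fun i => (⟨r i, hrN i⟩ : Fin N) := by
    intro i j hij
    by_contra hne
    have hxne : x i ≠ x j := fun h => hne (hx h)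
    have : r i = r j := by simpa using hij
    rcases lt_or_gt_of_ne hxne with h | h
    · exact absurd this (show r i ≠ r j from Ne.symm (Nat.ne_of_lt (rank_lt_rank h)))
    · exact absurd this (show r i ≠ r j from Nat.ne_of_lt (rank_lt_rank h))
  have hrbij : Function.Bijective fun i => (⟨r i, hrN i⟩ : Fin N) :=
    (Finite.injective_iff_bijective).mp hrinj
  set e : Fin N ≃ Fin N := Equiv.ofBijective _ hrbij with he
  have h1 : (univ.filter fun i : Fin N => r i < k)
      = univ.filter fun i : Fin N => (e i : ℕ) < k := rfl
  rw [h1]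
  have h2 : (univ.filter fun i : Fin N => (e i : ℕ) < k).card
      = (univ.filter fun v : Fin N => (v : ℕ) < k).card := by
    apply Finset.card_bij (fun i _ => e i)
    · intro i hi; simp only [mem_filter, mem_univ, true_and] at *; exact hi
    · intro i _ j _ h; exact e.injective h
    · intro v hv
      refine ⟨e.symm v, ?_, by simp⟩
      simp only [mem_filter, mem_univ, true_and] at *
      simpa using hv
  rw [h2]
  have h3 : (univ.filter fun v : Fin N => (v : ℕ) < k).image Fin.val = Finset.range k := by
    ext n
    simp only [Finset.mem_image, mem_filter, mem_univ, true_and, Finset.mem_range]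
    constructor
    · rintro ⟨v, hv, rfl⟩; exact hv
    · intro hn; exact ⟨⟨n, lt_of_lt_of_le hn hkN⟩, hn, rfl⟩
  have := Finset.card_image_of_injective
    (univ.filter fun v : Fin N => (v : ℕ) < k) Fin.val_injective
  rw [h3, Finset.card_range] at this
  exact this.symm

set_option maxHeartbeats 1000000 in
lemma weights_tendsto (N k : ℕ) (hk0 : 0 < k) (hkN : k < N)
    (x : Fin N → ℝ) (hdist : Function.Injective x)
    (w : ℝ → (Fin N → ℝ))
    (hw : ∀ τ : ℝ, 0 < τ →
      (∀ i, w τ i ∈ Set.Ioo (0 : ℝ) 1) ∧ (∑ i, w τ i) = k ∧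
      (∀ z : Fin N → ℝ, (∀ i, z i ∈ Set.Ioo (0 : ℝ) 1) → (∑ i, z i) = k → z ≠ w τ →
        -(∑ i, x i * w τ i) - τ * binEntropy (w τ) <
          -(∑ i, x i * z i) - τ * binEntropy z))
    (I : Finset (Fin N))
    (hI : I = Finset.univ.filter fun i => (Finset.univ.filter fun j => x i < x j).card < k) :
    ∀ i, Tendsto (fun τ => w τ i) (nhdsWithin 0 (Set.Ioi 0))
      (nhds (if i ∈ I then 1 else 0)) := by
  have hIcard : I.card = k := by rw [hI]; exact card_topk hkN.le hdist
  have hIc_card : Iᶜ.card = N - k := by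
    rw [Finset.card_compl, hIcard, Fintype.card_fin]
  have hIne : I.Nonempty := Finset.card_pos.mp (by omega)
  have hIcne : Iᶜ.Nonempty := Finset.card_pos.mp (by omega)
  -- separation
  have hxlt : ∀ i ∈ I, ∀ j ∈ Iᶜ, x j < x i := by
    intro i hi j hj
    have hj' := Finset.mem_compl.mp hj
    rw [hI] at hi hj'
    simp only [mem_filter, mem_univ, true_and] at hi hj'
    push_neg at hj'
    by_contra hle
    push_neg at hle
    have hne : i ≠ j := by rintro rfl; omega
    have hlt : x i < x j := lt_of_le_of_ne hle (fun h => hne (hdist h))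
    have := rank_lt_rank hlt
    omega
  -- gap bound with an opaque positive gap δ
  obtain ⟨δ, hδpos, gap⟩ : ∃ δ : ℝ, 0 < δ ∧ ∀ y : Fin N → ℝ,
      (∀ i, y i ∈ Set.Ioo (0:ℝ) 1) → (∑ i, y i) = (k:ℝ) →
      δ * (∑ j ∈ Iᶜ, y j) ≤ (∑ i ∈ I, x i) - ∑ i, x i * y i := by
    set m : ℝ := I.inf' hIne x with hm
    set M : ℝ := Iᶜ.sup' hIcne x with hM
    have hδ : M < m := by
      rw [Finset.sup'_lt_iff]
      intro j hj
      rw [Finset.lt_inf'_iff]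
      intro i hi
      exact hxlt i hi j hj
    refine ⟨m - M, by linarith, ?_⟩
    intro y hy hsum
    have hsplit : ∑ i ∈ I, x i * y i + ∑ i ∈ Iᶜ, x i * y i = ∑ i, x i * y i :=
      Finset.sum_add_sum_compl I _
    have hysplit : ∑ i ∈ I, y i + ∑ i ∈ Iᶜ, y i = (k:ℝ) := by
      rw [Finset.sum_add_sum_compl]; exact hsum
    have h1 : ∑ i ∈ Iᶜ, x i * y i ≤ M * ∑ i ∈ Iᶜ, y i := by
      rw [Finset.mul_sum]
      exact Finset.sum_le_sum fun i hi =>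
        mul_le_mul_of_nonneg_right (Finset.le_sup' x hi) (hy i).1.le
    have h3 : ∑ i ∈ I, (1 - y i) = ∑ j ∈ Iᶜ, y j := by
      rw [Finset.sum_sub_distrib, Finset.sum_const, hIcard]
      simp only [nsmul_eq_mul, mul_one]
      linarith
    have h2 : ∑ i ∈ I, x i * y i ≤ (∑ i ∈ I, x i) - m * ∑ j ∈ Iᶜ, y j := by
      rw [← h3, Finset.mul_sum, ← Finset.sum_sub_distrib]
      apply Finset.sum_le_sum
      intro i hi
      have hxm : m ≤ x i := Finset.inf'_le x hi
      nlinarith [(hy i).2, (hy i).1]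
    nlinarith
  -- minimality consequence with an opaque entropy bound C
  obtain ⟨C, hCnn, hmin⟩ : ∃ C : ℝ, 0 ≤ C ∧ ∀ τ : ℝ, 0 < τ →
      ∀ z : Fin N → ℝ, (∀ i, z i ∈ Set.Ioo (0:ℝ) 1) → (∑ i, z i) = (k:ℝ) →
      ∑ i, x i * z i ≤ ∑ i, x i * w τ i + τ * C := by
    refine ⟨(N:ℝ) * Real.log 2, ?_, ?_⟩
    · have := Real.log_nonneg (by norm_num : (1:ℝ) ≤ 2)
      positivity
    intro τ hτ z hz hzsum
    obtain ⟨hwio, hwsum, hopt⟩ := hw τ hτ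
    have hNlog : 0 ≤ (N:ℝ) * Real.log 2 := by
      have := Real.log_nonneg (by norm_num : (1:ℝ) ≤ 2)
      positivity
    by_cases hzw : z = w τ
    · subst hzw; nlinarith
    · have hlt := hopt z hz hzsum hzw
      have hH1 : binEntropy (w τ) ≤ N * Real.log 2 := binEntropy_le _
      have hH2 : 0 ≤ binEntropy z := binEntropy_nonneg' hz
      nlinarith
  have hNk : (0:ℝ) < (N:ℝ) - k := by
    have : (k:ℝ) < N := by exact_mod_cast hkN
    linarith
  have hkpos : (0:ℝ) < k := by exact_mod_cast hk0
  -- near-optimal feasible points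
  have hzexists : ∀ η : ℝ, 0 < η → ∃ z : Fin N → ℝ,
      (∀ i, z i ∈ Set.Ioo (0:ℝ) 1) ∧ (∑ i, z i) = (k:ℝ) ∧
      (∑ i ∈ I, x i) - ∑ i, x i * z i ≤ η := by
    intro η hη
    obtain ⟨β, hβpos, hβdef⟩ : ∃ β : ℝ, 0 < β ∧ β = (k:ℝ)/((N:ℝ)-k) :=
      ⟨_, by positivity, rfl⟩
    obtain ⟨A, hAdef⟩ : ∃ A : ℝ, A = (∑ i ∈ I, x i) - β * (∑ i ∈ Iᶜ, x i) := ⟨_, rfl⟩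
    have habs : (0:ℝ) < |A| + 1 := by positivity
    obtain ⟨ε', hε'pos, hε'half, hε'β, hε'η⟩ :
        ∃ ε' : ℝ, 0 < ε' ∧ ε' ≤ 1/2 ∧ ε' * β ≤ 1/2 ∧ ε' * (|A|+1) ≤ η := by
      refine ⟨min (1/2) (min (1/(2*β)) (η/(|A|+1))), ?_, min_le_left _ _, ?_, ?_⟩
      · exact lt_min (by norm_num) (lt_min (by positivity) (by positivity))
      · have h := le_trans (min_le_right (1/2:ℝ) (min (1/(2*β)) (η/(|A|+1))))
          (min_le_left (1/(2*β)) (η/(|A|+1)))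
        calc _ * β ≤ (1/(2*β)) * β := mul_le_mul_of_nonneg_right h hβpos.le
          _ = 1/2 := by field_simp
      · have h := le_trans (min_le_right (1/2:ℝ) (min (1/(2*β)) (η/(|A|+1))))
          (min_le_right (1/(2*β)) (η/(|A|+1)))
        calc _ * (|A|+1) ≤ (η/(|A|+1)) * (|A|+1) :=
              mul_le_mul_of_nonneg_right h habs.le
          _ = η := by field_simp
    refine ⟨fun i => if i ∈ I then 1 - ε' else ε' * β, ?_, ?_, ?_⟩
    · intro i
      by_cases hi : i ∈ I
      · simp only [if_pos hi]
        constructor <;> [linarith; linarith]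
      · simp only [if_neg hi]
        constructor
        · positivity
        · nlinarith
    · rw [← Finset.sum_add_sum_compl I]
      have e1 : ∑ i ∈ I, (if i ∈ I then 1 - ε' else ε' * β) = (k:ℝ) * (1 - ε') := by
        have hc : ∀ i ∈ I, (if i ∈ I then 1 - ε' else ε' * β) = 1 - ε' :=
          fun i hi => if_pos hi
        rw [Finset.sum_congr rfl hc, Finset.sum_const, hIcard, nsmul_eq_mul]
      have e2 : ∑ i ∈ Iᶜ, (if i ∈ I then 1 - ε' else ε' * β)
          = ((N:ℝ) - k) * (ε' * β) := by
        have hc : ∀ i ∈ Iᶜ, (if i ∈ I then 1 - ε' else ε' * β) = ε' * β :=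
          fun i hi => if_neg (Finset.mem_compl.mp hi)
        rw [Finset.sum_congr rfl hc, Finset.sum_const, hIc_card, nsmul_eq_mul,
          Nat.cast_sub hkN.le]
      rw [e1, e2, hβdef]
      field_simp
      ring
    · have f1 : ∑ i ∈ I, x i * (if i ∈ I then 1 - ε' else ε' * β)
          = (1 - ε') * ∑ i ∈ I, x i := by
        have hc : ∀ i ∈ I, x i * (if i ∈ I then 1 - ε' else ε' * β)
            = x i * (1 - ε') := fun i hi => by rw [if_pos hi]
        rw [Finset.sum_congr rfl hc, ← Finset.sum_mul, mul_comm]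
      have f2 : ∑ i ∈ Iᶜ, x i * (if i ∈ I then 1 - ε' else ε' * β)
          = (ε' * β) * ∑ i ∈ Iᶜ, x i := by
        have hc : ∀ i ∈ Iᶜ, x i * (if i ∈ I then 1 - ε' else ε' * β)
            = x i * (ε' * β) := fun i hi => by rw [if_neg (Finset.mem_compl.mp hi)]
        rw [Finset.sum_congr rfl hc, ← Finset.sum_mul, mul_comm]
      rw [← Finset.sum_add_sum_compl I, f1, f2]
      have e : (∑ i ∈ I, x i) - ((1 - ε') * ∑ i ∈ I, x i + (ε' * β) * ∑ i ∈ Iᶜ, x i)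
          = ε' * A := by rw [hAdef]; ring
      rw [e]
      calc ε' * A ≤ ε' * |A| := mul_le_mul_of_nonneg_left (le_abs_self A) hε'pos.le
        _ ≤ ε' * (|A|+1) := by nlinarith
        _ ≤ η := hε'η
  -- the slack tends to zero
  have hs0 : Tendsto (fun τ => ∑ j ∈ Iᶜ, w τ j) (nhdsWithin 0 (Set.Ioi 0)) (nhds 0) := by
    rw [Metric.tendsto_nhdsWithin_nhds]
    intro ε hε
    obtain ⟨z, hzio, hzsum, hzgap⟩ := hzexists (ε*δ/4) (by positivity)
    refine ⟨ε*δ/(4*(C+1)), by positivity, ?_⟩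
    intro τ hτ hdτ
    have hτpos : (0:ℝ) < τ := hτ
    rw [Real.dist_eq, sub_zero, abs_of_pos hτpos] at hdτ
    obtain ⟨hwio, hwsum, -⟩ := hw τ hτpos
    have hgap := gap (w τ) hwio hwsum
    have hminz := hmin τ hτpos z hzio hzsum
    have hb2 : τ * C ≤ ε * δ / 4 := by
      have hC1 : (0:ℝ) < C + 1 := by linarith
      have h2 : τ * (C+1) ≤ (ε*δ/(4*(C+1))) * (C+1) :=
        mul_le_mul_of_nonneg_right hdτ.le hC1.le
      have h3 : (ε*δ/(4*(C+1))) * (C+1) = ε*δ/4 := by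
        field_simp
      calc τ * C ≤ τ * C + τ := by linarith
        _ = τ * (C+1) := by ring
        _ ≤ ε*δ/4 := h2.trans_eq h3
    have hspos : 0 < ∑ j ∈ Iᶜ, w τ j :=
      Finset.sum_pos (fun j _ => (hwio j).1) hIcne
    rw [Real.dist_eq, sub_zero, abs_of_pos hspos]
    have hδs : δ * (∑ j ∈ Iᶜ, w τ j) ≤ δ * (ε/2) := by
      have haux : ε * δ / 4 + ε * δ / 4 = δ * (ε/2) := by ring
      linarith
    have := le_of_mul_le_mul_left hδs hδpos
    linarith
  -- conclude coordinatewise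
  intro i
  have hmem : ∀ᶠ τ in nhdsWithin (0:ℝ) (Set.Ioi 0), τ ∈ Set.Ioi (0:ℝ) :=
    eventually_mem_nhdsWithin
  by_cases hi : i ∈ I
  · simp only [if_pos hi]
    have h1 : Tendsto (fun τ => 1 - w τ i) (nhdsWithin 0 (Set.Ioi 0)) (nhds 0) := by
      apply squeeze_zero' (hmem.mono ?_) (hmem.mono ?_) hs0
      · intro τ hτ
        obtain ⟨hwio, -, -⟩ := hw τ hτ
        linarith [(hwio i).2]
      · intro τ hτ
        obtain ⟨hwio, hwsum, -⟩ := hw τ hτ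
        have h3 : ∑ j ∈ I, (1 - w τ j) = ∑ j ∈ Iᶜ, w τ j := by
          have hysplit : ∑ j ∈ I, w τ j + ∑ j ∈ Iᶜ, w τ j = (k:ℝ) := by
            rw [Finset.sum_add_sum_compl]; exact hwsum
          rw [Finset.sum_sub_distrib, Finset.sum_const, hIcard]
          simp only [nsmul_eq_mul, mul_one]
          linarith
        rw [← h3]
        exact Finset.single_le_sum (f := fun j => 1 - w τ j)
          (fun j _ => by show (0:ℝ) ≤ 1 - w τ j; linarith [(hwio j).2]) hi
    have h2 := tendsto_const_nhds.sub h1 (f := fun _ : ℝ => (1:ℝ))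
    simpa using h2
  · simp only [if_neg hi]
    apply squeeze_zero' (hmem.mono ?_) (hmem.mono ?_) hs0
    · intro τ hτ
      obtain ⟨hwio, -, -⟩ := hw τ hτ
      exact (hwio i).1.le
    · intro τ hτ
      obtain ⟨hwio, -, -⟩ := hw τ hτ
      exact Finset.single_le_sum (f := fun j => w τ j)
        (fun j _ => (hwio j).1.le) (Finset.mem_compl.mpr hi)

/-- The DCEM Gaussian update converges to the CEM Gaussian update as the temperature
`τ → 0⁺`: with `w τ` the unique minimizer of `-⟪x,y⟫ - τ·H_b(y)` over
`{y : 0 < yᵢ < 1, ∑ᵢ yᵢ = k}` (soft top-`k` weights, `x` having pairwise distinct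
coordinates) and `I` the set of indices of the `k` largest coordinates of `x`, the
weighted mean `(1/k) ∑ᵢ w(τ)ᵢ Xᵢ` tends to the elite mean `(1/k) ∑_{i∈I} Xᵢ` and the
weighted variance tends to the elite variance. -/
theorem dcem_update_tendsto_cem_update (N k : ℕ) (hN : 2 ≤ N) (hk0 : 0 < k) (hkN : k < N)
    (X : Fin N → ℝ) (x : Fin N → ℝ) (hdist : Function.Injective x)
    (w : ℝ → (Fin N → ℝ))
    (hw : ∀ τ : ℝ, 0 < τ →
      (∀ i, w τ i ∈ Set.Ioo (0 : ℝ) 1) ∧ (∑ i, w τ i) = k ∧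
      (∀ z : Fin N → ℝ, (∀ i, z i ∈ Set.Ioo (0 : ℝ) 1) → (∑ i, z i) = k → z ≠ w τ →
        -(∑ i, x i * w τ i) - τ * binEntropy (w τ) <
          -(∑ i, x i * z i) - τ * binEntropy z))
    (I : Finset (Fin N))
    (hI : I = Finset.univ.filter fun i => (Finset.univ.filter fun j => x i < x j).card < k) :
    Tendsto (fun τ : ℝ => (1 / (k : ℝ)) * ∑ i, w τ i * X i)
      (nhdsWithin 0 (Set.Ioi 0)) (nhds ((1 / (k : ℝ)) * ∑ i ∈ I, X i)) ∧
    Tendsto (fun τ : ℝ =>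
        (1 / (k : ℝ)) * ∑ i, w τ i * (X i - (1 / (k : ℝ)) * ∑ j, w τ j * X j) ^ 2)
      (nhdsWithin 0 (Set.Ioi 0))
      (nhds ((1 / (k : ℝ)) * ∑ i ∈ I, (X i - (1 / (k : ℝ)) * ∑ j ∈ I, X j) ^ 2)) := by
  have hcoord := weights_tendsto N k hk0 hkN x hdist w hw I hI
  have hsum : ∀ Y : Fin N → ℝ,
      Tendsto (fun τ => ∑ i, w τ i * Y i) (nhdsWithin (0:ℝ) (Set.Ioi 0))
        (nhds (∑ i ∈ I, Y i)) := by
    intro Y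
    have h1 : Tendsto (fun τ => ∑ i, w τ i * Y i) (nhdsWithin (0:ℝ) (Set.Ioi 0))
        (nhds (∑ i, (if i ∈ I then (1:ℝ) else 0) * Y i)) :=
      tendsto_finset_sum _ fun i _ => (hcoord i).mul_const (Y i)
    have heq : ∑ i, (if i ∈ I then (1:ℝ) else 0) * Y i = ∑ i ∈ I, Y i := by
      rw [Finset.sum_congr rfl (g := fun i => if i ∈ I then Y i else 0)
        (fun i _ => by by_cases h : i ∈ I <;> simp [h])]
      simp [Finset.sum_ite_mem]
    rwa [heq] at h1
  have hμ : Tendsto (fun τ : ℝ => (1 / (k : ℝ)) * ∑ i, w τ i * X i)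
      (nhdsWithin 0 (Set.Ioi 0)) (nhds ((1 / (k : ℝ)) * ∑ i ∈ I, X i)) :=
    (hsum X).const_mul _
  refine ⟨hμ, ?_⟩
  have hterm : ∀ i : Fin N, Tendsto
      (fun τ => w τ i * (X i - (1 / (k : ℝ)) * ∑ j, w τ j * X j) ^ 2)
      (nhdsWithin (0:ℝ) (Set.Ioi 0))
      (nhds ((if i ∈ I then (1:ℝ) else 0) *
        (X i - (1 / (k : ℝ)) * ∑ j ∈ I, X j) ^ 2)) := by
    intro i
    exact (hcoord i).mul ((tendsto_const_nhds.sub hμ).pow 2)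
  have h2 := (tendsto_finset_sum Finset.univ fun i _ => hterm i).const_mul (1 / (k:ℝ))
  have heq : ∑ i, (if i ∈ I then (1:ℝ) else 0) * (X i - (1 / (k : ℝ)) * ∑ j ∈ I, X j) ^ 2
      = ∑ i ∈ I, (X i - (1 / (k : ℝ)) * ∑ j ∈ I, X j) ^ 2 := by
    rw [Finset.sum_congr rfl
      (g := fun i => if i ∈ I then (X i - (1 / (k : ℝ)) * ∑ j ∈ I, X j) ^ 2 else 0)
      (fun i _ => by by_cases h : i ∈ I <;> simp [h])]
    simp [Finset.sum_ite_mem]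
  rwa [heq] at h2
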